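/- Adding a new source vertex r' with edges to all existing sources of a DAG G, and a new sink t' with edges from all existing sinks, preserves superbubbles: any pair ⟨s, t⟩ of original vertices is a superbubble in the augmented graph if and only if it is a superbubble in G. -/

import Mathlib

/-- `v` is reachable from `s` by a directed path whose internal vertices
(all vertices except the endpoints) avoid `avoid`. -/
def ReachWithout {V : Type*} (E : V → V → Prop) (avoid s v : V) : Prop :=
  s = v ∨ ∃ w, Relation.ReflTransGen (fun a b => E a b ∧ b ≠ avoid) s w ∧ E w v

/-- `t` is reachable from `v` by a directed path whose internal vertices avoid `avoid`. -/
def CoReachWithout {V : Type*} (E : V → V → Prop) (avoid v t : V) : Prop :=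
  v = t ∨ ∃ w, E v w ∧ Relation.ReflTransGen (fun a b => E a b ∧ a ≠ avoid) w t

/-- The subgraph induced by `U` is acyclic. -/
def AcyclicOn {V : Type*} (E : V → V → Prop) (U : Set V) : Prop :=
  ∀ v, ¬ Relation.TransGen (fun a b => E a b ∧ a ∈ U ∧ b ∈ U) v v

/-- The directed graph is acyclic. -/
def Acyclic {V : Type*} (E : V → V → Prop) : Prop :=
  ∀ v, ¬ Relation.TransGen E v v

/-- The reachability, matching and acyclicity conditions of a superbubble
(Definition 1, without minimality). -/
def SBCore {V : Type*} (E : V → V → Prop) (s t : V) : Prop :=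
  s ≠ t ∧ Relation.TransGen E s t ∧
  (∀ v, ReachWithout E t s v ↔ CoReachWithout E s v t) ∧
  AcyclicOn E {v | ReachWithout E t s v}

/-- `⟨s, t⟩` is a superbubble: reachability, matching, acyclicity and minimality. -/
def Superbubble {V : Type*} (E : V → V → Prop) (s t : V) : Prop :=
  SBCore E s t ∧ ∀ t', ReachWithout E t s t' → t' ≠ t → ¬ SBCore E s t'

/-- The edge relation of the augmented graph: a new source (none) with edges to all
sources of E, and a new sink (some none) with edges from all sinks of E; original
vertices are embedded as some (some v). -/
def augE {V : Type*} (E : V → V → Prop) : Option (Option V) → Option (Option V) → Prop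
  | some (some x), some (some y) => E x y
  | none, some (some x) => ∀ u, ¬ E u x
  | some (some x), some none => ∀ u, ¬ E x u
  | _, _ => False

section Aux
variable {V : Type*} {E : V → V → Prop}

lemma not_into_none (a : Option (Option V)) : ¬ augE E a none := by
  rcases a with _ | _ | a <;> simp [augE]

lemma not_from_somenone (b : Option (Option V)) : ¬ augE E (some none) b := by
  rcases b with _ | _ | b <;> simp [augE]

lemma rt_to_none {r : Option (Option V) → Option (Option V) → Prop}
    (hr : ∀ x y, r x y → augE E x y) {a : Option (Option V)}
    (h : Relation.ReflTransGen r a none) : a = none := by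
  rcases h.cases_tail with h | ⟨c, _, hc⟩
  · exact h.symm
  · exact absurd (hr _ _ hc) (not_into_none c)

lemma rt_from_somenone {r : Option (Option V) → Option (Option V) → Prop}
    (hr : ∀ x y, r x y → augE E x y) {b : Option (Option V)}
    (h : Relation.ReflTransGen r (some none) b) : b = some none := by
  rcases h.cases_head with h | ⟨c, hc, _⟩
  · exact h.symm
  · exact absurd (hr _ _ hc) (not_from_somenone c)

lemma rt_down {t s : V} {w : Option (Option V)}
    (h : Relation.ReflTransGen (fun a b => augE E a b ∧ b ≠ some (some t)) (some (some s)) w) :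
    ∀ x : V, w = some (some x) → Relation.ReflTransGen (fun a b => E a b ∧ b ≠ t) s x := by
  induction h with
  | refl =>
    rintro x hx
    injection hx with h; injection h with h
    try subst h
    exact Relation.ReflTransGen.refl
  | @tail b c hprev hstep ih =>
    rintro x rfl
    rcases b with _ | _ | y
    · exact absurd (rt_to_none (fun _ _ h => h.1) hprev) (by simp)
    · exact absurd hstep.1 (not_from_somenone _)
    · refine (ih y rfl).tail ⟨hstep.1, ?_⟩
      intro hxt; exact hstep.2 (by rw [hxt])

lemma rt_up {t s x : V}
    (h : Relation.ReflTransGen (fun a b => E a b ∧ b ≠ t) s x) :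
    Relation.ReflTransGen (fun a b => augE E a b ∧ b ≠ some (some t))
      (some (some s)) (some (some x)) := by
  induction h with
  | refl => exact .refl
  | tail _ hstep ih =>
    refine ih.tail ?_
    exact ⟨hstep.1, by simpa using hstep.2⟩

lemma rt_co_down {s t : V} {w : Option (Option V)}
    (h : Relation.ReflTransGen (fun a b => augE E a b ∧ a ≠ some (some s)) w (some (some t))) :
    ∀ y : V, w = some (some y) → Relation.ReflTransGen (fun a b => E a b ∧ a ≠ s) y t := by
  induction h using Relation.ReflTransGen.head_induction_on with
  | refl =>
    rintro y hy
    injection hy with h; injection h with h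
    try subst h
    exact Relation.ReflTransGen.refl
  | @head b c hstep hnext ih =>
    rintro y rfl
    rcases c with _ | _ | z
    · exact absurd hstep.1 (not_into_none _)
    · exact absurd (rt_from_somenone (fun _ _ h => h.1) hnext) (by simp)
    · refine Relation.ReflTransGen.head ⟨hstep.1, ?_⟩ (ih z rfl)
      intro hys; exact hstep.2 (by rw [hys])

lemma rt_co_up {s t y : V}
    (h : Relation.ReflTransGen (fun a b => E a b ∧ a ≠ s) y t) :
    Relation.ReflTransGen (fun a b => augE E a b ∧ a ≠ some (some s))
      (some (some y)) (some (some t)) := by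
  induction h using Relation.ReflTransGen.head_induction_on with
  | refl => exact .refl
  | head hstep _ ih =>
    refine Relation.ReflTransGen.head ?_ ih
    exact ⟨hstep.1, by simpa using hstep.2⟩

lemma not_tg_none {a : Option (Option V)} : ¬ Relation.TransGen (augE E) a none := by
  intro h
  cases h with
  | single h => exact not_into_none _ h
  | tail _ h => exact not_into_none _ h

lemma tg_down {s : V} {w : Option (Option V)}
    (h : Relation.TransGen (augE E) (some (some s)) w) :
    ∀ x : V, w = some (some x) → Relation.TransGen E s x := by
  induction h with
  | single h => rintro x rfl; exact .single h
  | @tail b c hprev hstep ih =>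
    rintro x rfl
    rcases b with _ | _ | y
    · exact absurd hprev not_tg_none
    · exact absurd hstep (not_from_somenone _)
    · have he : E y x := hstep
      exact (ih y rfl).tail he

lemma tg_up {s x : V} (h : Relation.TransGen E s x) :
    Relation.TransGen (augE E) (some (some s)) (some (some x)) := by
  induction h with
  | single h => exact .single h
  | tail _ hstep ih => exact ih.tail hstep

lemma reach_iff {s t v : V} :
    ReachWithout (augE E) (some (some t)) (some (some s)) (some (some v)) ↔
      ReachWithout E t s v := by
  constructor
  · rintro (h | ⟨w, hw, he⟩)
    · left; injections
    · rcases w with _ | _ | x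
      · exact absurd (rt_to_none (fun _ _ h => h.1) hw) (by simp)
      · exact absurd he (not_from_somenone _)
      · exact Or.inr ⟨x, rt_down hw x rfl, he⟩
  · rintro (rfl | ⟨w, hw, he⟩)
    · exact Or.inl rfl
    · exact Or.inr ⟨some (some w), rt_up hw, he⟩

lemma coreach_iff {s t v : V} :
    CoReachWithout (augE E) (some (some s)) (some (some v)) (some (some t)) ↔
      CoReachWithout E s v t := by
  constructor
  · rintro (h | ⟨w, he, hw⟩)
    · left; injections
    · rcases w with _ | _ | x
      · exact absurd he (not_into_none _)
      · exact absurd (rt_from_somenone (fun _ _ h => h.1) hw) (by simp)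
      · exact Or.inr ⟨x, he, rt_co_down hw x rfl⟩
  · rintro (rfl | ⟨w, he, hw⟩)
    · exact Or.inl rfl
    · exact Or.inr ⟨some (some w), he, rt_co_up hw⟩

lemma reach_none {s t : V} :
    ¬ ReachWithout (augE E) (some (some t)) (some (some s)) none := by
  rintro (h | ⟨w, _, he⟩)
  · exact nomatch h
  · exact not_into_none _ he

lemma coreach_none {s t : V} :
    CoReachWithout (augE E) (some (some s)) none (some (some t)) ↔
      ∃ x, (∀ u, ¬ E u x) ∧ Relation.ReflTransGen (fun a b => E a b ∧ a ≠ s) x t := by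
  constructor
  · rintro (h | ⟨w, he, hw⟩)
    · exact nomatch h
    · rcases w with _ | _ | x
      · exact absurd he (by simp [augE])
      · exact absurd he (by simp [augE])
      · exact ⟨x, he, rt_co_down hw x rfl⟩
  · rintro ⟨x, hx, hrt⟩
    exact Or.inr ⟨some (some x), hx, rt_co_up hrt⟩

lemma reach_somenone {s t : V} :
    ReachWithout (augE E) (some (some t)) (some (some s)) (some none) ↔
      ∃ x, (∀ u, ¬ E x u) ∧ Relation.ReflTransGen (fun a b => E a b ∧ b ≠ t) s x := by
  constructor
  · rintro (h | ⟨w, hw, he⟩)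
    · exact nomatch h
    · rcases w with _ | _ | x
      · exact absurd he (by simp [augE])
      · exact absurd he (not_from_somenone _)
      · exact ⟨x, he, rt_down hw x rfl⟩
  · rintro ⟨x, hx, hrt⟩
    exact Or.inr ⟨some (some x), rt_up hrt, hx⟩

lemma coreach_somenone {s t : V} :
    ¬ CoReachWithout (augE E) (some (some s)) (some none) (some (some t)) := by
  rintro (h | ⟨w, he, _⟩)
  · exact nomatch h
  · exact not_from_somenone _ he

lemma acyclicOn_of_acyclic (hA : Acyclic E) (U : Set V) : AcyclicOn E U := by
  intro v h
  exact hA v (Relation.TransGen.mono (fun a b hab => hab.1) _ _ h)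

lemma acyclic_aug (hA : Acyclic E) : Acyclic (augE E) := by
  rintro (_ | _ | x) h
  · exact not_tg_none h
  · obtain ⟨b, hb, -⟩ := Relation.TransGen.head'_iff.mp h
    exact not_from_somenone _ hb
  · exact hA x (tg_down h x rfl)

lemma noSink_of_match {s t : V} (hst : s ≠ t)
    (hm : ∀ v, ReachWithout E t s v ↔ CoReachWithout E s v t) :
    ∀ x, (∀ u, ¬ E x u) → ¬ Relation.ReflTransGen (fun a b => E a b ∧ b ≠ t) s x := by
  intro x hx hrt
  have hxt : x ≠ t ∧ ReachWithout E t s x := by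
    rcases hrt.cases_tail with rfl | ⟨c, hc, hstep⟩
    · exact ⟨hst, Or.inl rfl⟩
    · exact ⟨hstep.2, Or.inr ⟨c, hc, hstep.1⟩⟩
  rcases (hm x).mp hxt.2 with h | ⟨w, hw, _⟩
  · exact hxt.1 h
  · exact hx w hw

lemma noSource_of_match {s t : V} (htg : Relation.TransGen E s t)
    (hm : ∀ v, ReachWithout E t s v ↔ CoReachWithout E s v t) :
    ∀ x, (∀ u, ¬ E u x) → ¬ Relation.ReflTransGen (fun a b => E a b ∧ a ≠ s) x t := by
  intro x hx hrt
  rcases hrt.cases_head with rfl | ⟨c, hstep, hct⟩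
  · cases htg with
    | single h => exact hx s h
    | tail _ h => exact hx _ h
  · have hco : CoReachWithout E s x t := Or.inr ⟨c, hstep.1, hct⟩
    rcases (hm x).mpr hco with rfl | ⟨w, _, hw⟩
    · exact hstep.2 rfl
    · exact hx w hw

lemma sbcore_iff (hA : Acyclic E) (s t : V) :
    SBCore (augE E) (some (some s)) (some (some t)) ↔ SBCore E s t := by
  constructor
  · rintro ⟨hne, htg, hm, _⟩
    refine ⟨fun h => hne (by rw [h]), tg_down htg t rfl, fun v => ?_,
      acyclicOn_of_acyclic hA _⟩
    rw [← reach_iff, ← coreach_iff]; exact hm (some (some v))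
  · rintro ⟨hne, htg, hm, _⟩
    refine ⟨by simpa using hne, tg_up htg, ?_, acyclicOn_of_acyclic (acyclic_aug hA) _⟩
    rintro (_ | _ | v)
    · rw [coreach_none]
      constructor
      · exact fun h => absurd h reach_none
      · rintro ⟨x, hx, hrt⟩; exact absurd hrt (noSource_of_match htg hm x hx)
    · rw [reach_somenone]
      constructor
      · rintro ⟨x, hx, hrt⟩; exact absurd hrt (noSink_of_match hne hm x hx)
      · exact fun h => absurd h coreach_somenone
    · rw [reach_iff, coreach_iff]; exact hm v

end Aux


/-- Adding a new source with edges to all sources and a new sink with edges from all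
sinks preserves superbubbles on the original vertices. -/
theorem augmentation_preserves_superbubbles {V : Type*} [Fintype V] (E : V → V → Prop)
    (hA : Acyclic E) (s t : V) :
    Superbubble (augE E) (some (some s)) (some (some t)) ↔ Superbubble E s t := by
  constructor
  · rintro ⟨hcore, hmin⟩
    refine ⟨(sbcore_iff hA s t).mp hcore, fun t' hr hne hc => ?_⟩
    exact hmin (some (some t')) (reach_iff.mpr hr) (by simpa using hne)
      ((sbcore_iff hA s t').mpr hc)
  · rintro ⟨hcore, hmin⟩
    refine ⟨(sbcore_iff hA s t).mpr hcore, ?_⟩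
    rintro (_ | _ | t') hr hne hc
    · exact reach_none hr
    · obtain ⟨x, hx, hrt⟩ := reach_somenone.mp hr
      exact noSink_of_match hcore.1 hcore.2.2.1 x hx hrt
    · exact hmin t' (reach_iff.mp hr) (by simpa using hne) ((sbcore_iff hA s t').mp hc)
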